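/- Let C(k,j) = C(k, (k+j)/2)² − C(k, (k+j)/2 − 1)·C(k, (k+j)/2 + 1) (binomial coefficients), the number of pairs of ordered simple random walk paths of length k from 0 to j. For integers k ≥ 1 and j with |j| ≤ k and j ≡ k (mod 2), the number of pairs (v,w) of lattice paths of length k with ±1 steps, starting at v(0)=w(0)=0, ending at v(k)=w(k)=j, and satisfying v(i) ≥ w(i) for all 0 ≤ i ≤ k, equals C(k,j). -/
import Mathlib


/-- Binomial coefficient with integer index, `0` for negative indices. -/
def intChoose (k : ℕ) (z : ℤ) : ℤ :=
  if z < 0 then 0 else (Nat.choose k z.toNat : ℤ)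

/-- The Karlin–McGregor count: `C(k,j) = binom(k,(k+j)/2)² − binom(k,(k+j)/2−1)·binom(k,(k+j)/2+1)`. -/
def KMcount (k : ℕ) (j : ℤ) : ℤ :=
  intChoose k ((k + j) / 2) ^ 2 -
    intChoose k ((k + j) / 2 - 1) * intChoose k ((k + j) / 2 + 1)

def phi (k : ℕ) (d : ℤ) : ℤ :=
  if ((k : ℤ) + d) % 2 = 0 then intChoose k (((k : ℤ) + d) / 2) else 0

lemma intChoose_pascal (k : ℕ) (m : ℤ) :
    intChoose (k + 1) m = intChoose k (m - 1) + intChoose k m := by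
  rcases lt_or_ge m 0 with h | h
  · have h1 : m - 1 < 0 := by omega
    simp [intChoose, h, h1]
  · lift m to ℕ using h
    rcases Nat.eq_zero_or_pos m with rfl | hm
    · simp [intChoose]
    · obtain ⟨n, rfl⟩ := Nat.exists_eq_succ_of_ne_zero (by omega : m ≠ 0)
      rw [intChoose, intChoose, intChoose]
      push_cast
      rw [if_neg (show ¬((n:ℤ) + 1 < 0) by omega), if_neg (show ¬((n:ℤ) + 1 - 1 < 0) by omega)]
      have e2 : ((n : ℤ) + 1 - 1).toNat = n := by omega
      have e3 : ((n : ℤ) + 1).toNat = n + 1 := by omega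
      rw [e2, e3, Nat.choose_succ_succ]
      rw [if_neg (show ¬((n:ℤ) + 1 < 0) by omega)]
      push_cast [Nat.succ_eq_add_one]; ring

lemma phi_rec (k : ℕ) (d : ℤ) : phi (k + 1) d = phi k (d - 1) + phi k (d + 1) := by
  unfold phi
  push_cast
  rcases Int.emod_two_eq_zero_or_one ((k : ℤ) + d) with h | h
  · rw [if_neg (by omega), if_neg (by omega), if_neg (by omega)]
    simp
  · rw [if_pos (by omega), if_pos (by omega), if_pos (by omega)]
    have e1 : ((k : ℤ) + (d - 1)) / 2 = ((k : ℤ) + 1 + d) / 2 - 1 := by omega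
    have e2 : ((k : ℤ) + (d + 1)) / 2 = ((k : ℤ) + 1 + d) / 2 := by omega
    rw [e1, e2, intChoose_pascal]

def Q (k : ℕ) (x y j : ℤ) : ℤ :=
  phi k (j - x) * phi k (j - y) - phi k (j - x - 2) * phi k (j - y + 2)

lemma Q_rec (k : ℕ) (x y j : ℤ) :
    Q (k + 1) x y j =
      Q k (x + 1) (y + 1) j + Q k (x + 1) (y - 1) j +
      Q k (x - 1) (y + 1) j + Q k (x - 1) (y - 1) j := by
  unfold Q
  rw [phi_rec, phi_rec, phi_rec, phi_rec]
  ring_nf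

lemma Q_bad (k : ℕ) (x j : ℤ) : Q k (x - 1) (x + 1) j = 0 := by
  unfold Q
  ring_nf

def pairSet (k : ℕ) (x y j : ℤ) : Set ((Fin (k + 1) → ℤ) × (Fin (k + 1) → ℤ)) :=
  {p | p.1 0 = x ∧ p.2 0 = y ∧ p.1 (Fin.last k) = j ∧ p.2 (Fin.last k) = j ∧
    (∀ i : Fin k, p.1 i.succ - p.1 i.castSucc = 1 ∨ p.1 i.succ - p.1 i.castSucc = -1) ∧
    (∀ i : Fin k, p.2 i.succ - p.2 i.castSucc = 1 ∨ p.2 i.succ - p.2 i.castSucc = -1) ∧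
    (∀ i : Fin (k + 1), p.2 i ≤ p.1 i)}

lemma pairSet_empty {k : ℕ} {x y j : ℤ} (h : x < y) : pairSet k x y j = ∅ := by
  ext p
  simp only [pairSet, Set.mem_setOf_eq, Set.mem_empty_iff_false, iff_false]
  rintro ⟨h1, h2, -, -, -, -, h7⟩
  have := h7 0
  omega

/-- the tail map -/
def tl {k : ℕ} (p : (Fin (k + 2) → ℤ) × (Fin (k + 2) → ℤ)) :
    (Fin (k + 1) → ℤ) × (Fin (k + 1) → ℤ) :=
  (fun i => p.1 i.succ, fun i => p.2 i.succ)

def A (k : ℕ) (x y j a b : ℤ) : Set ((Fin (k + 2) → ℤ) × (Fin (k + 2) → ℤ)) :=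
  {p ∈ pairSet (k + 1) x y j | p.1 1 = a ∧ p.2 1 = b}

lemma tl_mapsTo {k : ℕ} {x y j a b : ℤ} :
    Set.MapsTo tl (A k x y j a b) (pairSet k a b j) := by
  rintro ⟨v, w⟩ ⟨⟨h1, h2, h3, h4, h5, h6, h7⟩, ha, hb⟩
  refine ⟨ha, hb, ?_, ?_, ?_, ?_, ?_⟩
  · show v (Fin.last k).succ = j
    rwa [Fin.succ_last]
  · show w (Fin.last k).succ = j
    rwa [Fin.succ_last]
  · intro i
    show v i.succ.succ - v i.castSucc.succ = 1 ∨ v i.succ.succ - v i.castSucc.succ = -1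
    rw [Fin.succ_castSucc]
    exact h5 i.succ
  · intro i
    show w i.succ.succ - w i.castSucc.succ = 1 ∨ w i.succ.succ - w i.castSucc.succ = -1
    rw [Fin.succ_castSucc]
    exact h6 i.succ
  · intro i
    exact h7 i.succ

lemma tl_injOn {k : ℕ} {x y j a b : ℤ} :
    Set.InjOn tl (A k x y j a b) := by
  rintro ⟨v, w⟩ ⟨⟨h1, h2, -⟩, -⟩ ⟨v', w'⟩ ⟨⟨h1', h2', -⟩, -⟩ heq
  have hv : (fun i : Fin (k+1) => v i.succ) = fun i => v' i.succ := congrArg Prod.fst heq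
  have hw : (fun i : Fin (k+1) => w i.succ) = fun i => w' i.succ := congrArg Prod.snd heq
  have : v = v' := by
    funext i
    induction i using Fin.cases with
    | zero => rw [show (0 : Fin (k+2)) = 0 from rfl]; exact h1.trans h1'.symm
    | succ i' => exact congrFun hv i'
  have : w = w' := by
    funext i
    induction i using Fin.cases with
    | zero => exact h2.trans h2'.symm
    | succ i' => exact congrFun hw i'
  simp_all

def cns {k : ℕ} (x : ℤ) (v : Fin (k + 1) → ℤ) : Fin (k + 2) → ℤ :=
  Fin.cons x v

@[simp] lemma cns_zero {k : ℕ} (x : ℤ) (v : Fin (k + 1) → ℤ) : cns x v 0 = x := rfl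

@[simp] lemma cns_succ {k : ℕ} (x : ℤ) (v : Fin (k + 1) → ℤ) (i : Fin (k + 1)) :
    cns x v i.succ = v i := by
  simp [cns]

@[simp] lemma cns_one {k : ℕ} (x : ℤ) (v : Fin (k + 1) → ℤ) : cns x v 1 = v 0 := by
  rw [show (1 : Fin (k + 2)) = Fin.succ 0 from rfl, cns_succ]

lemma tl_surjOn {k : ℕ} {x y j a b : ℤ} (hyx : y ≤ x)
    (ha : a - x = 1 ∨ a - x = -1) (hb : b - y = 1 ∨ b - y = -1) :
    Set.SurjOn tl (A k x y j a b) (pairSet k a b j) := by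
  rintro ⟨v, w⟩ ⟨h1, h2, h3, h4, h5, h6, h7⟩
  simp only [Set.mem_setOf_eq] at h1 h2 h3 h4 h5 h6 h7
  refine ⟨(cns x v, cns y w), ⟨⟨?_, ?_, ?_, ?_, ?_, ?_, ?_⟩, ?_, ?_⟩, ?_⟩
  · exact cns_zero x v
  · exact cns_zero y w
  · show cns x v (Fin.last (k + 1)) = j
    rw [← Fin.succ_last, cns_succ]; exact h3
  · show cns y w (Fin.last (k + 1)) = j
    rw [← Fin.succ_last, cns_succ]; exact h4
  · intro i
    show cns x v i.succ - cns x v i.castSucc = 1 ∨ cns x v i.succ - cns x v i.castSucc = -1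
    induction i using Fin.cases with
    | zero =>
      rw [Fin.succ_zero_eq_one, Fin.castSucc_zero, cns_zero, cns_one, h1]
      omega
    | succ i' =>
      rw [← Fin.succ_castSucc, cns_succ, cns_succ]
      exact h5 i'
  · intro i
    show cns y w i.succ - cns y w i.castSucc = 1 ∨ cns y w i.succ - cns y w i.castSucc = -1
    induction i using Fin.cases with
    | zero =>
      rw [Fin.succ_zero_eq_one, Fin.castSucc_zero, cns_zero, cns_one, h2]
      omega
    | succ i' =>
      rw [← Fin.succ_castSucc, cns_succ, cns_succ]
      exact h6 i'
  · intro i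
    show cns y w i ≤ cns x v i
    induction i using Fin.cases with
    | zero => rw [cns_zero, cns_zero]; exact hyx
    | succ i' => rw [cns_succ, cns_succ]; exact h7 i'
  · show cns x v 1 = a
    rw [cns_one]; exact h1
  · show cns y w 1 = b
    rw [cns_one]; exact h2
  · show (fun i => cns x v i.succ, fun i => cns y w i.succ) = (v, w)
    refine Prod.ext ?_ ?_ <;> · funext i; simp

lemma A_subset {k : ℕ} {x y j a b : ℤ} : A k x y j a b ⊆ pairSet (k + 1) x y j :=
  fun _ hp => hp.1

lemma pairSet_eq_union (k : ℕ) (x y j : ℤ) :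
    pairSet (k + 1) x y j =
      A k x y j (x + 1) (y + 1) ∪ A k x y j (x + 1) (y - 1) ∪
      A k x y j (x - 1) (y + 1) ∪ A k x y j (x - 1) (y - 1) := by
  ext p
  constructor
  · intro hp
    obtain ⟨h1, h2, h3, h4, h5, h6, h7⟩ := hp
    have hv := h5 0
    have hw := h6 0
    rw [Fin.succ_zero_eq_one, Fin.castSucc_zero] at hv hw
    rw [h1] at hv
    rw [h2] at hw
    rcases hv with hv | hv <;> rcases hw with hw | hw
    · exact Or.inl (Or.inl (Or.inl ⟨⟨h1, h2, h3, h4, h5, h6, h7⟩, by omega, by omega⟩))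
    · exact Or.inl (Or.inl (Or.inr ⟨⟨h1, h2, h3, h4, h5, h6, h7⟩, by omega, by omega⟩))
    · exact Or.inl (Or.inr ⟨⟨h1, h2, h3, h4, h5, h6, h7⟩, by omega, by omega⟩)
    · exact Or.inr ⟨⟨h1, h2, h3, h4, h5, h6, h7⟩, by omega, by omega⟩
  · rintro (((hp | hp) | hp) | hp) <;> exact A_subset hp

lemma A_finite {k : ℕ} {x y j a b : ℤ} (h : (pairSet k a b j).Finite) :
    (A k x y j a b).Finite :=
  Set.Finite.of_finite_image (h.subset tl_mapsTo.image_subset) tl_injOn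

lemma pairSet_finite (k : ℕ) (x y j : ℤ) : (pairSet k x y j).Finite := by
  induction k generalizing x y j with
  | zero =>
    apply Set.Finite.subset (Set.finite_singleton ((fun _ => j), (fun _ => j)))
    rintro ⟨v, w⟩ ⟨h1, h2, h3, h4, -, -, -⟩
    have hv : v = fun _ => j := by
      funext i
      rw [show i = Fin.last 0 from Fin.ext (by omega)]
      exact h3
    have hw : w = fun _ => j := by
      funext i
      rw [show i = Fin.last 0 from Fin.ext (by omega)]
      exact h4
    simp [hv, hw]
  | succ k ih =>
    rw [pairSet_eq_union]
    exact (((A_finite (ih _ _ _)).union (A_finite (ih _ _ _))).union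
      (A_finite (ih _ _ _))).union (A_finite (ih _ _ _))

lemma A_disjoint {k : ℕ} {x y j a b a' b' : ℤ} (h : a ≠ a' ∨ b ≠ b') :
    Disjoint (A k x y j a b) (A k x y j a' b') := by
  rw [Set.disjoint_left]
  rintro p ⟨-, ha, hb⟩ ⟨-, ha', hb'⟩
  rcases h with h | h
  · exact h (ha ▸ ha')
  · exact h (hb ▸ hb')

lemma A_ncard {k : ℕ} {x y j a b : ℤ} (hyx : y ≤ x)
    (ha : a - x = 1 ∨ a - x = -1) (hb : b - y = 1 ∨ b - y = -1) :
    (A k x y j a b).ncard = (pairSet k a b j).ncard := by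
  have hbij : Set.BijOn tl (A k x y j a b) (pairSet k a b j) :=
    ⟨tl_mapsTo, tl_injOn, tl_surjOn hyx ha hb⟩
  rw [← hbij.image_eq, Set.ncard_image_of_injOn tl_injOn]

lemma pairSet_step (k : ℕ) (x y j : ℤ) (hyx : y ≤ x) :
    (pairSet (k + 1) x y j).ncard =
      (pairSet k (x + 1) (y + 1) j).ncard + (pairSet k (x + 1) (y - 1) j).ncard +
      (pairSet k (x - 1) (y + 1) j).ncard + (pairSet k (x - 1) (y - 1) j).ncard := by
  have f1 : (A k x y j (x + 1) (y + 1)).Finite := A_finite (pairSet_finite _ _ _ _)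
  have f2 : (A k x y j (x + 1) (y - 1)).Finite := A_finite (pairSet_finite _ _ _ _)
  have f3 : (A k x y j (x - 1) (y + 1)).Finite := A_finite (pairSet_finite _ _ _ _)
  have f4 : (A k x y j (x - 1) (y - 1)).Finite := A_finite (pairSet_finite _ _ _ _)
  rw [pairSet_eq_union]
  rw [Set.ncard_union_eq (by
      refine Disjoint.union_left (Disjoint.union_left ?_ ?_) ?_ <;>
        exact A_disjoint (by omega)) ((f1.union f2).union f3) f4]
  rw [Set.ncard_union_eq (by
      refine Disjoint.union_left ?_ ?_ <;> exact A_disjoint (by omega)) (f1.union f2) f3]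
  rw [Set.ncard_union_eq (A_disjoint (by omega)) f1 f2]
  rw [A_ncard hyx (by omega) (by omega), A_ncard hyx (by omega) (by omega),
    A_ncard hyx (by omega) (by omega), A_ncard hyx (by omega) (by omega)]

lemma phi_zero (d : ℤ) : phi 0 d = if d = 0 then 1 else 0 := by
  unfold phi intChoose
  rcases eq_or_ne d 0 with rfl | hd
  · norm_num
  · rw [if_neg hd]
    push_cast
    rw [zero_add]
    rcases Int.emod_two_eq_zero_or_one d with h | h
    · rw [if_pos h]
      rcases lt_or_ge (d / 2) 0 with h2 | h2
      · rw [if_pos h2]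
      · rw [if_neg (by omega)]
        have : 1 ≤ (d / 2).toNat := by omega
        rw [Nat.choose_eq_zero_of_lt (by omega)]
        norm_num
    · rw [if_neg (by omega)]

lemma pairSet_zero_card (x y j : ℤ) (hyx : y ≤ x) :
    ((pairSet 0 x y j).ncard : ℤ) = Q 0 x y j := by
  have hQ : Q 0 x y j =
      (if j - x = 0 then 1 else 0) * (if j - y = 0 then 1 else 0) -
      (if j - x - 2 = 0 then 1 else 0) * (if j - y + 2 = 0 then 1 else 0) := by
    unfold Q
    rw [phi_zero, phi_zero, phi_zero, phi_zero]
  by_cases hx : x = j ∧ y = j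
  · have hset : pairSet 0 x y j = {((fun _ => j), (fun _ => j))} := by
      ext ⟨v, w⟩
      constructor
      · rintro ⟨h1, h2, h3, h4, -, -, -⟩
        have hv : v = fun _ => j := by
          funext i
          rw [show i = Fin.last 0 from Fin.ext (by omega)]
          exact h3
        have hw : w = fun _ => j := by
          funext i
          rw [show i = Fin.last 0 from Fin.ext (by omega)]
          exact h4
        simp [hv, hw]
      · rintro h
        rw [Set.mem_singleton_iff] at h
        rw [h]
        refine ⟨hx.1.symm, hx.2.symm, rfl, rfl, fun i => i.elim0, fun i => i.elim0,
          fun _ => le_refl _⟩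
    rw [hset, Set.ncard_singleton, hQ]
    split_ifs <;> omega
  · have hset : pairSet 0 x y j = ∅ := by
      ext ⟨v, w⟩
      simp only [Set.mem_empty_iff_false, iff_false]
      rintro ⟨h1, h2, h3, h4, -, -, -⟩
      rw [show (0 : Fin 1) = Fin.last 0 from Fin.ext (by omega)] at h1 h2
      exact hx ⟨h1 ▸ h3 ▸ rfl, h2 ▸ h4 ▸ rfl⟩
    rw [hset, Set.ncard_empty, hQ]
    push_cast
    split_ifs <;> omega

lemma main_lemma (k : ℕ) : ∀ x y j : ℤ, y ≤ x → (x - y) % 2 = 0 →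
    ((pairSet k x y j).ncard : ℤ) = Q k x y j := by
  induction k with
  | zero => exact fun x y j h _ => pairSet_zero_card x y j h
  | succ k ih =>
    intro x y j hyx hpar
    rw [pairSet_step k x y j hyx]
    push_cast
    by_cases hxy : x = y
    · subst hxy
      have hempty : pairSet k (x - 1) (x + 1) j = ∅ := pairSet_empty (by omega)
      rw [ih (x + 1) (x + 1) j le_rfl (by omega),
        ih (x + 1) (x - 1) j (by omega) (by omega),
        ih (x - 1) (x - 1) j le_rfl (by omega),
        hempty, Set.ncard_empty, Q_rec, Q_bad]
      push_cast
      ring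
    · have h2 : y + 2 ≤ x := by omega
      rw [ih (x + 1) (y + 1) j (by omega) (by omega),
        ih (x + 1) (y - 1) j (by omega) (by omega),
        ih (x - 1) (y + 1) j (by omega) (by omega),
        ih (x - 1) (y - 1) j (by omega) (by omega), Q_rec]

/-- The number of ordered pairs `(v,w)` of `±1`-step lattice paths of length `k`
from `0` to `j` with `v ≥ w` equals `C(k,j)`. -/
theorem stmt_4 (k : ℕ) (hk : 1 ≤ k) (j : ℤ) (hj : |j| ≤ (k : ℤ))
    (hpar : (j - (k : ℤ)) % 2 = 0) :
    (Set.ncard {p : (Fin (k + 1) → ℤ) × (Fin (k + 1) → ℤ) |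
        p.1 0 = 0 ∧ p.2 0 = 0 ∧ p.1 (Fin.last k) = j ∧ p.2 (Fin.last k) = j ∧
        (∀ i : Fin k, p.1 i.succ - p.1 i.castSucc = 1 ∨ p.1 i.succ - p.1 i.castSucc = -1) ∧
        (∀ i : Fin k, p.2 i.succ - p.2 i.castSucc = 1 ∨ p.2 i.succ - p.2 i.castSucc = -1) ∧
        (∀ i : Fin (k + 1), p.2 i ≤ p.1 i)} : ℤ) = KMcount k j := by
  have hset : {p : (Fin (k + 1) → ℤ) × (Fin (k + 1) → ℤ) |
        p.1 0 = 0 ∧ p.2 0 = 0 ∧ p.1 (Fin.last k) = j ∧ p.2 (Fin.last k) = j ∧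
        (∀ i : Fin k, p.1 i.succ - p.1 i.castSucc = 1 ∨ p.1 i.succ - p.1 i.castSucc = -1) ∧
        (∀ i : Fin k, p.2 i.succ - p.2 i.castSucc = 1 ∨ p.2 i.succ - p.2 i.castSucc = -1) ∧
        (∀ i : Fin (k + 1), p.2 i ≤ p.1 i)} = pairSet k 0 0 j := rfl
  rw [hset, main_lemma k 0 0 j le_rfl (by norm_num)]
  unfold Q KMcount phi
  have hpar2 : ((k : ℤ) + (j - 0)) % 2 = 0 := by omega
  have hpar3 : ((k : ℤ) + (j - 0 - 2)) % 2 = 0 := by omega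
  have hpar4 : ((k : ℤ) + (j - 0 + 2)) % 2 = 0 := by omega
  rw [if_pos hpar2, if_pos hpar3, if_pos hpar4]
  have e1 : ((k : ℤ) + (j - 0)) / 2 = ((k : ℤ) + j) / 2 := by omega
  have e2 : ((k : ℤ) + (j - 0 - 2)) / 2 = ((k : ℤ) + j) / 2 - 1 := by omega
  have e3 : ((k : ℤ) + (j - 0 + 2)) / 2 = ((k : ℤ) + j) / 2 + 1 := by omega
  rw [e1, e2, e3]
  ring
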